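/- Under the su(N) generator hypotheses, the Dirac matrices in the Dirac representation, and the Grassmann setup, the cyclically contracted triple-tensor sixth-order combinations vanish: Σ_{i₁,i₂,i₃ ∈ Fin N} Σ_{κ,λ,μ ∈ Fin 4} ε κ · ε λ · ε μ • B (σ κ λ) i₁ i₁ * B (σ λ μ) i₂ i₃ * B (σ μ κ) i₃ i₂ = 0, and likewise Σ_{i₁,i₂,i₃ ∈ Fin N} Σ_{κ,λ,μ ∈ Fin 4} ε κ · ε λ · ε μ • B (σ κ λ) i₁ i₂ * B (σ λ μ) i₂ i₁ * B (σ μ κ) i₃ i₃ = 0. (In physics notation: ψ̄_{i₁} σ_κ{}^λ ψ_{i₁} · ψ̄_{i₂} σ_λ{}^μ ψ_{i₃} · ψ̄_{i₃} σ_μ{}^κ ψ_{i₂} = 0 and its reordering.) -/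
import Mathlib


noncomputable section

open Complex Matrix

/-- The Dirac γ-matrices in the Dirac representation. -/
def γm : Fin 4 → Matrix (Fin 4) (Fin 4) ℂ :=
  ![!![1,0,0,0; 0,1,0,0; 0,0,-1,0; 0,0,0,-1],
    !![0,0,0,1; 0,0,1,0; 0,-1,0,0; -1,0,0,0],
    !![0,0,0,-I; 0,0,I,0; 0,I,0,0; -I,0,0,0],
    !![0,0,1,0; 0,0,0,-1; -1,0,0,0; 0,1,0,0]]

/-- γ⁵ = i·γ⁰γ¹γ²γ³. -/
def γ5 : Matrix (Fin 4) (Fin 4) ℂ := I • (γm 0 * γm 1 * γm 2 * γm 3)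

/-- σ^{μν} = (i/2)[γ^μ, γ^ν]. -/
def σm (μ ν : Fin 4) : Matrix (Fin 4) (Fin 4) ℂ := (I / 2) • (γm μ * γm ν - γm ν * γm μ)

/-- The metric signs ε 0 = 1, ε 1 = ε 2 = ε 3 = −1 used to raise/lower indices. -/
def εs : Fin 4 → ℤ := ![1, -1, -1, -1]

/-- The totally antisymmetric Levi-Civita symbol on four indices,
normalized by ε₄ 0 1 2 3 = 1. -/
def ε4 (κ l μ ν : Fin 4) : ℤ :=
  Matrix.det (Matrix.of fun p q : Fin 4 => if ![κ, l, μ, ν] p = q then (1 : ℤ) else 0)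

/-- The Grassmann algebra generated by the 8N fermion components:
the exterior algebra of the direct sum of two copies of (Fin 4 × Fin N) → ℂ. -/
abbrev GrassAlg (N : ℕ) :=
  ExteriorAlgebra ℂ (((Fin 4 × Fin N) → ℂ) × ((Fin 4 × Fin N) → ℂ))

/-- ψ (A, i): the image in the Grassmann algebra of the standard basis vector
of the first summand indexed by (A, i). -/
def ψv (N : ℕ) (A : Fin 4) (i : Fin N) : GrassAlg N :=
  ExteriorAlgebra.ι ℂ (Pi.single (A, i) 1, 0)

/-- ψ̄ (A, i): the image in the Grassmann algebra of the standard basis vector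
of the second summand indexed by (A, i). -/
def ψbar (N : ℕ) (A : Fin 4) (i : Fin N) : GrassAlg N :=
  ExteriorAlgebra.ι ℂ (0, Pi.single (A, i) 1)

/-- The fermion bilinear B Γ i j = ∑_{A,B} Γ A B · ψ̄ (A,i) ψ (B,j). -/
def Bgr (N : ℕ) (Γ : Matrix (Fin 4) (Fin 4) ℂ) (i j : Fin N) : GrassAlg N :=
  ∑ A : Fin 4, ∑ B : Fin 4, Γ A B • (ψbar N A i * ψv N B j)

/-- ⟪Γ, X⟫ = ∑_{i,j} X i j · B Γ i j, the bilinear with Dirac structure Γ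
and color structure X. -/
def pairing (N : ℕ) (Γ : Matrix (Fin 4) (Fin 4) ℂ)
    (X : Matrix (Fin N) (Fin N) ℂ) : GrassAlg N :=
  ∑ i : Fin N, ∑ j : Fin N, X i j • Bgr N Γ i j

/-- ⟪Γ⟫ = ⟪Γ, 1⟫, the color-singlet bilinear. -/
def sing (N : ℕ) (Γ : Matrix (Fin 4) (Fin 4) ℂ) : GrassAlg N := pairing N Γ 1

/- ### Auxiliary lemmas -/

/-- Two degree-two products of anticommuting elements commute. -/
lemma anticomm_pair {A : Type*} [Ring A] {a b c d : A}
    (hac : a * c = -(c * a)) (had : a * d = -(d * a))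
    (hbc : b * c = -(c * b)) (hbd : b * d = -(d * b)) :
    a * b * (c * d) = c * d * (a * b) := by
  calc a * b * (c * d) = a * (b * c) * d := by
        rw [mul_assoc, ← mul_assoc b c d, ← mul_assoc a (b * c) d]
    _ = -(a * (c * b) * d) := by rw [hbc, mul_neg, neg_mul]
    _ = -(a * c * (b * d)) := by rw [← mul_assoc a c b, mul_assoc (a * c) b d]
    _ = -(-(c * a) * -(d * b)) := by rw [hac, hbd]
    _ = -(c * a * (d * b)) := by rw [neg_mul_neg]
    _ = -(c * (a * d) * b) := by rw [mul_assoc c a (d * b), ← mul_assoc a d b,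
        ← mul_assoc c (a * d) b]
    _ = c * (d * a) * b := by rw [had, mul_neg, neg_mul, neg_neg]
    _ = c * d * (a * b) := by rw [← mul_assoc c d a, mul_assoc (c * d) a b]

lemma iota_anticomm {R M : Type*} [CommRing R] [AddCommGroup M] [Module R M] (x y : M) :
    ExteriorAlgebra.ι R x * ExteriorAlgebra.ι R y
      = -(ExteriorAlgebra.ι R y * ExteriorAlgebra.ι R x) :=
  eq_neg_of_add_eq_zero_left (ExteriorAlgebra.ι_add_mul_swap x y)

/-- Bilinears commute (they are even elements of the Grassmann algebra). -/
lemma Bgr_comm (N : ℕ) (Γ Γ' : Matrix (Fin 4) (Fin 4) ℂ) (i j k l : Fin N) :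
    Bgr N Γ i j * Bgr N Γ' k l = Bgr N Γ' k l * Bgr N Γ i j := by
  have hBgr : ∀ (Δ : Matrix (Fin 4) (Fin 4) ℂ) (a b : Fin N),
      Bgr N Δ a b = ∑ p : Fin 4 × Fin 4, Δ p.1 p.2 • (ψbar N p.1 a * ψv N p.2 b) := by
    intro Δ a b
    rw [Bgr]
    exact (Fintype.sum_prod_type
      (fun p : Fin 4 × Fin 4 => Δ p.1 p.2 • (ψbar N p.1 a * ψv N p.2 b))).symm
  rw [hBgr, hBgr, Finset.sum_mul_sum, Finset.sum_mul_sum, Finset.sum_comm]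
  refine Finset.sum_congr rfl fun p _ => Finset.sum_congr rfl fun q _ => ?_
  rw [smul_mul_assoc, smul_mul_assoc, mul_smul_comm, mul_smul_comm, smul_comm]
  congr 1
  congr 1
  exact anticomm_pair (iota_anticomm _ _) (iota_anticomm _ _)
    (iota_anticomm _ _) (iota_anticomm _ _)

lemma σm_antisymm (a b : Fin 4) : σm a b = -σm b a := by
  rw [σm, σm, ← smul_neg, neg_sub]

lemma Bgr_neg (N : ℕ) (Γ : Matrix (Fin 4) (Fin 4) ℂ) (i j : Fin N) :
    Bgr N (-Γ) i j = -Bgr N Γ i j := by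
  simp [Bgr, neg_smul, ← Finset.sum_neg_distrib]

/-- A sum over a fintype vanishes if it is odd under an involution (here any
self-equivalence with the negation property). -/
lemma sum_cancel {M : Type*} [AddCommGroup M] [Module ℂ M] {α : Type*} [Fintype α]
    (f : α → M) (e : α ≃ α) (h : ∀ x, f (e x) = -f x) : ∑ x, f x = 0 := by
  have h1 : ∑ x, f (e x) = ∑ x, f x := Fintype.sum_equiv e _ _ fun x => rfl
  have h2 : ∑ x, f (e x) = -∑ x, f x := by
    rw [← Finset.sum_neg_distrib]
    exact Finset.sum_congr rfl fun x _ => h x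
  have h3 : ∑ x, f x = -∑ x, f x := h1.symm.trans h2
  have h4 : (2 : ℂ) • ∑ x, f x = 0 := by
    rw [two_smul]
    nth_rewrite 1 [h3]
    exact neg_add_cancel _
  have h5 := congrArg (fun z => (2⁻¹ : ℂ) • z) h4
  simpa [smul_smul] using h5

/-- **Vanishing of the cyclically contracted triple-tensor combinations.** -/
theorem sigma_cyclic_vanish (N : ℕ) (hN : 2 ≤ N)
    (T : Fin (N ^ 2 - 1) → Matrix (Fin N) (Fin N) ℂ)
    (htr : ∀ a, (T a).trace = 0)
    (hherm : ∀ a, (T a)ᴴ = T a)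
    (horth : ∀ a b, (T a * T b).trace = if a = b then (1 / 2 : ℂ) else 0) :
    (∑ i₁ : Fin N, ∑ i₂ : Fin N, ∑ i₃ : Fin N, ∑ κ : Fin 4, ∑ lam : Fin 4, ∑ μ : Fin 4,
        ((εs κ : ℂ) * (εs lam : ℂ) * (εs μ : ℂ)) •
          (Bgr N (σm κ lam) i₁ i₁ * Bgr N (σm lam μ) i₂ i₃ * Bgr N (σm μ κ) i₃ i₂) = 0) ∧
    (∑ i₁ : Fin N, ∑ i₂ : Fin N, ∑ i₃ : Fin N, ∑ κ : Fin 4, ∑ lam : Fin 4, ∑ μ : Fin 4,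
        ((εs κ : ℂ) * (εs lam : ℂ) * (εs μ : ℂ)) •
          (Bgr N (σm κ lam) i₁ i₂ * Bgr N (σm lam μ) i₂ i₁ * Bgr N (σm μ κ) i₃ i₃) = 0) := by
  constructor
  · -- first combination: odd under (i₂ ↔ i₃, κ ↔ lam)
    have hprod : (∑ x : Fin N × Fin N × Fin N × Fin 4 × Fin 4 × Fin 4,
        ((εs x.2.2.2.1 : ℂ) * (εs x.2.2.2.2.1 : ℂ) * (εs x.2.2.2.2.2 : ℂ)) •
          (Bgr N (σm x.2.2.2.1 x.2.2.2.2.1) x.1 x.1 *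
            Bgr N (σm x.2.2.2.2.1 x.2.2.2.2.2) x.2.1 x.2.2.1 *
            Bgr N (σm x.2.2.2.2.2 x.2.2.2.1) x.2.2.1 x.2.1))
        = ∑ i₁ : Fin N, ∑ i₂ : Fin N, ∑ i₃ : Fin N, ∑ κ : Fin 4, ∑ lam : Fin 4, ∑ μ : Fin 4,
        ((εs κ : ℂ) * (εs lam : ℂ) * (εs μ : ℂ)) •
          (Bgr N (σm κ lam) i₁ i₁ * Bgr N (σm lam μ) i₂ i₃ * Bgr N (σm μ κ) i₃ i₂) := by
      simp only [Fintype.sum_prod_type]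
    rw [← hprod]
    refine sum_cancel _
      ⟨fun x => (x.1, x.2.2.1, x.2.1, x.2.2.2.2.1, x.2.2.2.1, x.2.2.2.2.2),
       fun x => (x.1, x.2.2.1, x.2.1, x.2.2.2.2.1, x.2.2.2.1, x.2.2.2.2.2),
       fun x => rfl, fun x => rfl⟩ ?_
    rintro ⟨i₁, i₂, i₃, κ, lam, μ⟩
    show ((εs lam : ℂ) * (εs κ : ℂ) * (εs μ : ℂ)) •
        (Bgr N (σm lam κ) i₁ i₁ * Bgr N (σm κ μ) i₃ i₂ * Bgr N (σm μ lam) i₂ i₃)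
      = -(((εs κ : ℂ) * (εs lam : ℂ) * (εs μ : ℂ)) •
        (Bgr N (σm κ lam) i₁ i₁ * Bgr N (σm lam μ) i₂ i₃ * Bgr N (σm μ κ) i₃ i₂))
    rw [σm_antisymm lam κ, σm_antisymm κ μ, σm_antisymm μ lam,
      Bgr_neg, Bgr_neg, Bgr_neg,
      show ((εs lam : ℂ) * (εs κ : ℂ) * (εs μ : ℂ))
        = ((εs κ : ℂ) * (εs lam : ℂ) * (εs μ : ℂ)) from by ring,
      neg_mul_neg, mul_neg, smul_neg]
    congr 2
    rw [mul_assoc, Bgr_comm N (σm μ κ) (σm lam μ) i₃ i₂ i₂ i₃, ← mul_assoc]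
  · -- second combination: odd under (i₁ ↔ i₂, κ ↔ μ)
    have hprod : (∑ x : Fin N × Fin N × Fin N × Fin 4 × Fin 4 × Fin 4,
        ((εs x.2.2.2.1 : ℂ) * (εs x.2.2.2.2.1 : ℂ) * (εs x.2.2.2.2.2 : ℂ)) •
          (Bgr N (σm x.2.2.2.1 x.2.2.2.2.1) x.1 x.2.1 *
            Bgr N (σm x.2.2.2.2.1 x.2.2.2.2.2) x.2.1 x.1 *
            Bgr N (σm x.2.2.2.2.2 x.2.2.2.1) x.2.2.1 x.2.2.1))
        = ∑ i₁ : Fin N, ∑ i₂ : Fin N, ∑ i₃ : Fin N, ∑ κ : Fin 4, ∑ lam : Fin 4, ∑ μ : Fin 4,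
        ((εs κ : ℂ) * (εs lam : ℂ) * (εs μ : ℂ)) •
          (Bgr N (σm κ lam) i₁ i₂ * Bgr N (σm lam μ) i₂ i₁ * Bgr N (σm μ κ) i₃ i₃) := by
      simp only [Fintype.sum_prod_type]
    rw [← hprod]
    refine sum_cancel _
      ⟨fun x => (x.2.1, x.1, x.2.2.1, x.2.2.2.2.2, x.2.2.2.2.1, x.2.2.2.1),
       fun x => (x.2.1, x.1, x.2.2.1, x.2.2.2.2.2, x.2.2.2.2.1, x.2.2.2.1),
       fun x => rfl, fun x => rfl⟩ ?_
    rintro ⟨i₁, i₂, i₃, κ, lam, μ⟩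
    show ((εs μ : ℂ) * (εs lam : ℂ) * (εs κ : ℂ)) •
        (Bgr N (σm μ lam) i₂ i₁ * Bgr N (σm lam κ) i₁ i₂ * Bgr N (σm κ μ) i₃ i₃)
      = -(((εs κ : ℂ) * (εs lam : ℂ) * (εs μ : ℂ)) •
        (Bgr N (σm κ lam) i₁ i₂ * Bgr N (σm lam μ) i₂ i₁ * Bgr N (σm μ κ) i₃ i₃))
    rw [σm_antisymm μ lam, σm_antisymm lam κ, σm_antisymm κ μ,
      Bgr_neg, Bgr_neg, Bgr_neg,
      show ((εs μ : ℂ) * (εs lam : ℂ) * (εs κ : ℂ))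
        = ((εs κ : ℂ) * (εs lam : ℂ) * (εs μ : ℂ)) from by ring,
      neg_mul_neg, mul_neg, smul_neg]
    congr 2
    rw [Bgr_comm N (σm lam μ) (σm κ lam) i₂ i₁ i₁ i₂]
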